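/- Let v : ℝ³ → ℝ³ be a C² vector field with compact support. Then Σ_{i,j=1}^{3} ∫_{ℝ³} (∂ᵢvⱼ(x))² dx = ∫_{ℝ³} (div v(x))² dx + ∫_{ℝ³} ‖curl v(x)‖² dx. -/

import Mathlib

noncomputable section

open MeasureTheory Real

/-- Euclidean 3-space. -/
abbrev E3 : Type := EuclideanSpace ℝ (Fin 3)

/-- Build a vector in `E3` from three coordinates. -/
def mk3 (a b c : ℝ) : E3 := (WithLp.equiv 2 (Fin 3 → ℝ)).symm ![a, b, c]

/-- Partial derivative in the `i`-th coordinate direction. -/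
def pd (i : Fin 3) (f : E3 → ℝ) (x : E3) : ℝ :=
  fderiv ℝ f x (EuclideanSpace.single i 1)

/-- Curl of a vector field on `ℝ³`. -/
def ecurl (f : E3 → E3) (x : E3) : E3 :=
  mk3 (pd 1 (fun y => f y 2) x - pd 2 (fun y => f y 1) x)
      (pd 2 (fun y => f y 0) x - pd 0 (fun y => f y 2) x)
      (pd 0 (fun y => f y 1) x - pd 1 (fun y => f y 0) x)

/-- Divergence of a vector field on `ℝ³`. -/
def ediv (f : E3 → E3) (x : E3) : ℝ :=
  pd 0 (fun y => f y 0) x + pd 1 (fun y => f y 1) x + pd 2 (fun y => f y 2) x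

/-- Gradient of a scalar field on `ℝ³`. -/
def egrad (h : E3 → ℝ) (x : E3) : E3 :=
  mk3 (pd 0 h x) (pd 1 h x) (pd 2 h x)

/-- Cross product on `ℝ³`. -/
def cross3 (u w : E3) : E3 :=
  mk3 (u 1 * w 2 - u 2 * w 1) (u 2 * w 0 - u 0 * w 2) (u 0 * w 1 - u 1 * w 0)

/-- Advection `(g · ∇) f` of a vector field `f` along the vector `g`. -/
def advect (g : E3) (f : E3 → E3) (x : E3) : E3 :=
  mk3 (∑ j, g j * pd j (fun y => f y 0) x)
      (∑ j, g j * pd j (fun y => f y 1) x)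
      (∑ j, g j * pd j (fun y => f y 2) x)

/-- Componentwise Laplacian of a vector field on `ℝ³`. -/
def elap (f : E3 → E3) (x : E3) : E3 :=
  mk3 (∑ i, pd i (fun y => pd i (fun z => f z 0) y) x)
      (∑ i, pd i (fun y => pd i (fun z => f z 1) y) x)
      (∑ i, pd i (fun y => pd i (fun z => f z 2) y) x)

/-- Time derivative of a time-dependent vector field. -/
def tderiv (f : ℝ → E3 → E3) (t : ℝ) (x : E3) : E3 :=
  deriv (fun s => f s x) t

lemma pd_cont {f : E3 → ℝ} (hf : ContDiff ℝ 2 f) (i : Fin 3) : Continuous (pd i f) :=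
  (hf.continuous_fderiv (by norm_num)).clm_apply continuous_const

lemma pd_supp {f : E3 → ℝ} (hf : HasCompactSupport f) (i : Fin 3) :
    HasCompactSupport (pd i f) :=
  (hf.fderiv ℝ).comp_left (g := fun L : E3 →L[ℝ] ℝ => L (EuclideanSpace.single i 1)) rfl

lemma pd_contDiff {f : E3 → ℝ} (hf : ContDiff ℝ 2 f) (i : Fin 3) :
    ContDiff ℝ 1 (pd i f) := by
  have h1 : ContDiff ℝ 1 (fderiv ℝ f) := hf.fderiv_right (by norm_num)
  exact (ContinuousLinearMap.apply ℝ ℝ (EuclideanSpace.single i 1)).contDiff.comp h1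

lemma fderiv_pd_symm {f : E3 → ℝ} (hf : ContDiff ℝ 2 f) (x : E3) (i j : Fin 3) :
    fderiv ℝ (pd i f) x (EuclideanSpace.single j 1)
      = fderiv ℝ (pd j f) x (EuclideanSpace.single i 1) := by
  have hdf : ContDiff ℝ 1 (fderiv ℝ f) := hf.fderiv_right (by norm_num)
  have h : ∀ (k : Fin 3), fderiv ℝ (pd k f) x
      = (fderiv ℝ (fderiv ℝ f) x).flip (EuclideanSpace.single k 1) := by
    intro k
    have h2 : pd k f = fun y => (fderiv ℝ f y) (EuclideanSpace.single k 1) := rfl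
    rw [h2, fderiv_clm_apply (hdf.differentiable one_ne_zero x) (differentiableAt_const _)]
    simp
  rw [h i, h j]
  simp only [ContinuousLinearMap.flip_apply]
  exact ((hf.contDiffAt).isSymmSndFDerivAt (by norm_num)).eq _ _

lemma ibp {f g : E3 → ℝ} (hf : ContDiff ℝ 2 f) (hg : ContDiff ℝ 2 g)
    (hfs : HasCompactSupport f) (hgs : HasCompactSupport g) (i j : Fin 3) :
    ∫ x : E3, pd i f x * pd j g x
      = - ∫ x : E3, fderiv ℝ (pd i f) x (EuclideanSpace.single j 1) * g x := by
  have hFc : Continuous (fun x => fderiv ℝ (pd i f) x (EuclideanSpace.single j 1)) :=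
    ((pd_contDiff hf i).continuous_fderiv one_ne_zero).clm_apply continuous_const
  have hFs : HasCompactSupport (fun x => fderiv ℝ (pd i f) x (EuclideanSpace.single j 1)) :=
    ((pd_supp hfs i).fderiv ℝ).comp_left
      (g := fun L : E3 →L[ℝ] ℝ => L (EuclideanSpace.single j 1)) rfl
  exact integral_mul_fderiv_eq_neg_fderiv_mul_of_integrable
    ((hFc.mul hg.continuous).integrable_of_hasCompactSupport hFs.mul_right)
    (((pd_cont hf i).mul (pd_cont hg j)).integrable_of_hasCompactSupport
      (pd_supp hfs i).mul_right)
    (((pd_cont hf i).mul hg.continuous).integrable_of_hasCompactSupport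
      (pd_supp hfs i).mul_right)
    (fun x _ => (pd_contDiff hf i).differentiable one_ne_zero x)
    (fun x _ => hg.differentiable (by norm_num) x)

lemma pd_swap_integral {f g : E3 → ℝ} (hf : ContDiff ℝ 2 f) (hg : ContDiff ℝ 2 g)
    (hfs : HasCompactSupport f) (hgs : HasCompactSupport g) (i j : Fin 3) :
    ∫ x : E3, pd i f x * pd j g x = ∫ x : E3, pd j f x * pd i g x := by
  rw [ibp hf hg hfs hgs i j, ibp hf hg hfs hgs j i]
  have h : (fun x => fderiv ℝ (pd i f) x (EuclideanSpace.single j 1) * g x)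
      = fun x => fderiv ℝ (pd j f) x (EuclideanSpace.single i 1) * g x :=
    funext fun x => by rw [fderiv_pd_symm hf x i j]
  rw [h]


lemma hcs_sub {f g : E3 → ℝ} (hf : HasCompactSupport f) (hg : HasCompactSupport g) :
    HasCompactSupport (fun x => f x - g x) :=
  hf.comp₂_left hg (sub_zero 0)

/-- Div-curl identity: for a compactly supported `C²` vector field on `ℝ³`,
`Σ_{i,j} ∫ (∂ᵢvⱼ)² = ∫ (div v)² + ∫ ‖curl v‖²`. -/
theorem div_curl_L2_identity
    (v : E3 → E3) (hv : ContDiff ℝ 2 v) (hsupp : HasCompactSupport v) :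
    (∑ i : Fin 3, ∑ j : Fin 3, ∫ x : E3, (pd i (fun y => v y j) x)^2)
      = (∫ x : E3, (ediv v x)^2) + (∫ x : E3, ‖ecurl v x‖^2) := by
  set a : Fin 3 → Fin 3 → E3 → ℝ := fun i j => pd i (fun y => v y j) with ha
  have hcomp : ∀ j : Fin 3, ContDiff ℝ 2 (fun y => v y j) := contDiff_euclidean.mp hv
  have hcs : ∀ j : Fin 3, HasCompactSupport (fun y => v y j) := fun j =>
    hsupp.comp_left (g := fun w : E3 => w j) rfl
  have hAc : ∀ i j, Continuous (a i j) := fun i j => pd_cont (hcomp j) i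
  have hAs : ∀ i j, HasCompactSupport (a i j) := fun i j => pd_supp (hcs j) i
  have hmul : ∀ i j k l, Integrable (fun x : E3 => a i j x * a k l x) := fun i j k l =>
    ((hAc i j).mul (hAc k l)).integrable_of_hasCompactSupport (hAs i j).mul_right
  have hsq : ∀ i j, Integrable (fun x : E3 => (a i j x)^2) := fun i j => by
    simpa [pow_two] using hmul i j i j
  -- key swaps
  have key : ∀ i j : Fin 3, ∫ x : E3, a i i x * a j j x = ∫ x : E3, a j i x * a i j x :=
    fun i j => pd_swap_integral (hcomp i) (hcomp j) (hcs i) (hcs j) i j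
  have hz : ∀ i j : Fin 3, ∫ x : E3, (a i j x * a j i x - a i i x * a j j x) = 0 := by
    intro i j
    rw [integral_sub (hmul i j j i) (hmul i i j j), key i j]
    have h : (fun x : E3 => a i j x * a j i x) = fun x => a j i x * a i j x :=
      funext fun x => mul_comm _ _
    rw [h, sub_self]
  -- curl norm squared pointwise
  have hcurl : ∀ x : E3, ‖ecurl v x‖^2
      = (a 1 2 x - a 2 1 x)^2 + (a 2 0 x - a 0 2 x)^2 + (a 0 1 x - a 1 0 x)^2 := by
    intro x
    rw [EuclideanSpace.norm_eq, sq_sqrt (by positivity)]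
    simp only [ecurl, mk3, Fin.sum_univ_three, Real.norm_eq_abs, sq_abs]
    simp [WithLp.equiv_symm_apply, ha]
  -- the three pieces
  set f1 : E3 → ℝ := fun x => (ediv v x)^2 with hf1
  set f2 : E3 → ℝ := fun x => ‖ecurl v x‖^2 with hf2
  set f3 : E3 → ℝ := fun x =>
      2 * (a 0 1 x * a 1 0 x - a 0 0 x * a 1 1 x)
    + 2 * (a 0 2 x * a 2 0 x - a 0 0 x * a 2 2 x)
    + 2 * (a 1 2 x * a 2 1 x - a 1 1 x * a 2 2 x) with hf3
  have hint1 : Integrable f1 := by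
    have hc : Continuous f1 := by
      have : Continuous (ediv v) := ((hAc 0 0).add (hAc 1 1)).add (hAc 2 2)
      exact this.pow 2
    have hs : HasCompactSupport f1 := by
      have h0 : HasCompactSupport (ediv v) := ((hAs 0 0).add (hAs 1 1)).add (hAs 2 2)
      exact h0.comp_left (g := fun t : ℝ => t^2) (by simp)
    exact hc.integrable_of_hasCompactSupport hs
  have hint2 : Integrable f2 := by
    have he : f2 = fun x => (a 1 2 x - a 2 1 x)^2 + (a 2 0 x - a 0 2 x)^2
        + (a 0 1 x - a 1 0 x)^2 := funext fun x => hcurl x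
    rw [he]
    have hc : Continuous (fun x : E3 => (a 1 2 x - a 2 1 x)^2 + (a 2 0 x - a 0 2 x)^2
        + (a 0 1 x - a 1 0 x)^2) := by fun_prop
    have h1 : HasCompactSupport (fun x : E3 => (a 1 2 x - a 2 1 x)^2) :=
      (hcs_sub (hAs 1 2) (hAs 2 1)).comp_left (g := fun t : ℝ => t^2) (by simp)
    have h2 : HasCompactSupport (fun x : E3 => (a 2 0 x - a 0 2 x)^2) :=
      (hcs_sub (hAs 2 0) (hAs 0 2)).comp_left (g := fun t : ℝ => t^2) (by simp)
    have h3 : HasCompactSupport (fun x : E3 => (a 0 1 x - a 1 0 x)^2) :=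
      (hcs_sub (hAs 0 1) (hAs 1 0)).comp_left (g := fun t : ℝ => t^2) (by simp)
    have hs : HasCompactSupport (fun x : E3 => (a 1 2 x - a 2 1 x)^2
        + (a 2 0 x - a 0 2 x)^2 + (a 0 1 x - a 1 0 x)^2) :=
      (h1.comp₂_left h2 (add_zero 0)).comp₂_left h3 (add_zero 0)
    exact hc.integrable_of_hasCompactSupport hs
  have hg1 : Integrable (fun x : E3 => a 0 1 x * a 1 0 x - a 0 0 x * a 1 1 x) :=
    (hmul 0 1 1 0).sub (hmul 0 0 1 1)
  have hg2 : Integrable (fun x : E3 => a 0 2 x * a 2 0 x - a 0 0 x * a 2 2 x) :=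
    (hmul 0 2 2 0).sub (hmul 0 0 2 2)
  have hg3 : Integrable (fun x : E3 => a 1 2 x * a 2 1 x - a 1 1 x * a 2 2 x) :=
    (hmul 1 2 2 1).sub (hmul 1 1 2 2)
  have hint3 : Integrable f3 := ((hg1.const_mul 2).add (hg2.const_mul 2)).add (hg3.const_mul 2)
  have h12 : Integrable (fun x : E3 => 2 * (a 0 1 x * a 1 0 x - a 0 0 x * a 1 1 x)
      + 2 * (a 0 2 x * a 2 0 x - a 0 0 x * a 2 2 x)) :=
    (hg1.const_mul 2).add (hg2.const_mul 2)
  have hI3 : ∫ x : E3, f3 x = 0 := by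
    have e1 : ∫ x : E3, f3 x
        = (∫ x : E3, (2 * (a 0 1 x * a 1 0 x - a 0 0 x * a 1 1 x)
            + 2 * (a 0 2 x * a 2 0 x - a 0 0 x * a 2 2 x)))
          + ∫ x : E3, 2 * (a 1 2 x * a 2 1 x - a 1 1 x * a 2 2 x) :=
      integral_add h12 (hg3.const_mul 2)
    have e2 : (∫ x : E3, (2 * (a 0 1 x * a 1 0 x - a 0 0 x * a 1 1 x)
          + 2 * (a 0 2 x * a 2 0 x - a 0 0 x * a 2 2 x)))
        = (∫ x : E3, 2 * (a 0 1 x * a 1 0 x - a 0 0 x * a 1 1 x))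
          + ∫ x : E3, 2 * (a 0 2 x * a 2 0 x - a 0 0 x * a 2 2 x) :=
      integral_add (hg1.const_mul 2) (hg2.const_mul 2)
    rw [e1, e2, integral_const_mul, integral_const_mul, integral_const_mul,
      hz 0 1, hz 0 2, hz 1 2]
    ring
  calc (∑ i : Fin 3, ∑ j : Fin 3, ∫ x : E3, (a i j x)^2)
      = ∑ i : Fin 3, ∫ x : E3, ∑ j : Fin 3, (a i j x)^2 :=
        Finset.sum_congr rfl fun i _ => (integral_finset_sum _ fun j _ => hsq i j).symm
    _ = ∫ x : E3, ∑ i : Fin 3, ∑ j : Fin 3, (a i j x)^2 :=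
        (integral_finset_sum _ fun i _ => integrable_finset_sum _ fun j _ => hsq i j).symm
    _ = ∫ x : E3, (f1 x + (f2 x + f3 x)) := by
        have h : (fun x : E3 => ∑ i : Fin 3, ∑ j : Fin 3, (a i j x)^2)
            = fun x => f1 x + (f2 x + f3 x) := by
          funext x
          rw [hf1, hf2, hf3]
          simp only [Fin.sum_univ_three]
          rw [hcurl x]
          simp only [ediv, ha]
          ring
        rw [h]
    _ = (∫ x : E3, f1 x) + ∫ x : E3, (f2 x + f3 x) :=
        integral_add hint1 (hint2.add hint3)
    _ = (∫ x : E3, f1 x) + ((∫ x : E3, f2 x) + (∫ x : E3, f3 x)) := by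
        rw [integral_add hint2 hint3]
    _ = (∫ x : E3, (ediv v x)^2) + (∫ x : E3, ‖ecurl v x‖^2) := by rw [hI3]; simp [hf1, hf2]
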